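/- arXiv:2005.09003 — 9 statements merged into one kernel-verified Lean document; each statement's English description precedes it below -/
import Mathlib

section
/- Let (a,b,c,d) and (a',b',c',d') be distinct quadruples in ℝ⁴. Then the lines ℒ(a,b,c,d) and ℒ(a',b',c',d') in ℝ³ have nonempty intersection if and only if (a−a')(d−d') = (b−b')(c−c') and (a,c) ≠ (a',c'). -/
/-- The line in `ℝ³` associated with the quadruple `(a, b, c, d) ∈ ℝ⁴`:
`ℒ(a,b,c,d) = {(b + ta, d + tc, t) : t ∈ ℝ}`. -/
def Lmap (a b c d : ℝ) : Set (ℝ × ℝ × ℝ) :=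
  {q | ∃ t : ℝ, q = (b + t * a, d + t * c, t)}

/-- **Lemma (intersection criterion).** For distinct quadruples `(a,b,c,d) ≠ (a',b',c',d')`
in `ℝ⁴`, the lines `ℒ(a,b,c,d)` and `ℒ(a',b',c',d')` meet if and only if
`(a−a')(d−d') = (b−b')(c−c') and (a,c) ≠ (a',c')`. -/
theorem Lmap_intersect_iff (a b c d a' b' c' d' : ℝ)
    (h : (a, b, c, d) ≠ (a', b', c', d')) :
    (Lmap a b c d ∩ Lmap a' b' c' d').Nonempty ↔
      ((a - a') * (d - d') = (b - b') * (c - c') ∧ (a, c) ≠ (a', c')) := by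
  constructor
  · rintro ⟨q, ⟨t, rfl⟩, ⟨s, hq⟩⟩
    obtain ⟨h1, h2, h3⟩ : b + t * a = b' + s * a' ∧ d + t * c = d' + s * c' ∧ t = s := by
      simpa [Prod.ext_iff] using hq
    subst h3
    constructor
    · linear_combination (a - a') * h2 - (c - c') * h1
    · rintro hac
      obtain ⟨ha, hc⟩ : a = a' ∧ c = c' := by simpa [Prod.ext_iff] using hac
      apply h
      subst ha; subst hc
      have hb : b = b' := by linarith
      have hd : d = d' := by linarith
      simp [hb, hd]
  · rintro ⟨hdet, hac⟩
    have hac' : a ≠ a' ∨ c ≠ c' := by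
      by_contra hcon
      push_neg at hcon
      exact hac (by simp [hcon.1, hcon.2])
    rcases hac' with ha | hc
    · have ha' : a - a' ≠ 0 := sub_ne_zero.mpr ha
      refine ⟨(b + ((b' - b) / (a - a')) * a, d + ((b' - b) / (a - a')) * c,
        (b' - b) / (a - a')), ⟨_, rfl⟩, ⟨(b' - b) / (a - a'), ?_⟩⟩
      have h1 : b + (b' - b) / (a - a') * a = b' + (b' - b) / (a - a') * a' := by
        field_simp; ring
      have h2 : d + (b' - b) / (a - a') * c = d' + (b' - b) / (a - a') * c' := by
        field_simp; nlinarith [hdet]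
      rw [h1, h2]
    · have hc' : c - c' ≠ 0 := sub_ne_zero.mpr hc
      refine ⟨(b + ((d' - d) / (c - c')) * a, d + ((d' - d) / (c - c')) * c,
        (d' - d) / (c - c')), ⟨_, rfl⟩, ⟨(d' - d) / (c - c'), ?_⟩⟩
      have h1 : b + (d' - d) / (c - c') * a = b' + (d' - d) / (c - c') * a' := by
        field_simp; nlinarith [hdet]
      have h2 : d + (d' - d) / (c - c') * c = d' + (d' - d) / (c - c') * c' := by
        field_simp; ring
      rw [h1, h2]
end

section
/- Let 𝕀 be a finite set of N distinct intervals in ℝ², and let D = {(a,b,c,d) : ((a,b),(c,d)) ∈ 𝕀} ∪ {(c,d,a,b) : ((a,b),(c,d)) ∈ 𝕀} be the doubled set of quadruples. Assume the 2N quadruples in D are pairwise distinct and that any two distinct quadruples (a,b,c,d), (a',b',c',d') ∈ D satisfy (a,c) ≠ (a',c'). Let T be the number of unordered pairs of distinct intervals (a,b,c,d), (a',b',c',d') in 𝕀 counted with multiplicity: a pair contributes 1 for each of the two equations (a−a')(d−d') = (b−b')(c−c') and (a−c')(d−b') = (c−a')(b−d') that it satisfies. Let P be the number of unordered pairs of distinct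 lines in {ℒ(q) : q ∈ D} with nonempty intersection. Then P = 2T + N. -/
open scoped Classical

/-- The reverse of the interval `(a,b,c,d)` is the interval `(c,d,a,b)`. -/
def reverseInterval (i : ℝ × ℝ × ℝ × ℝ) : ℝ × ℝ × ℝ × ℝ :=
  (i.2.2.1, i.2.2.2, i.1, i.2.1)

/-- The parallelism/intersection condition for two quadruples. -/
def Eline (q q' : ℝ × ℝ × ℝ × ℝ) : Prop :=
  (q.1 - q'.1) * (q.2.2.2 - q'.2.2.2) = (q.2.1 - q'.2.1) * (q.2.2.1 - q'.2.2.1)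

/-- The second (mixed) trapezoid condition. -/
def Emix (q q' : ℝ × ℝ × ℝ × ℝ) : Prop :=
  (q.1 - q'.2.2.1) * (q.2.2.2 - q'.2.1) = (q.2.2.1 - q'.1) * (q.2.1 - q'.2.2.2)

lemma lmap_injective : Function.Injective
    (fun q : ℝ × ℝ × ℝ × ℝ => Lmap q.1 q.2.1 q.2.2.1 q.2.2.2) := by
  rintro ⟨a, b, c, d⟩ ⟨a', b', c', d'⟩ h
  simp only at h
  have h0 : ((b : ℝ), d, (0:ℝ)) ∈ Lmap a' b' c' d' := by
    rw [← h]; exact ⟨0, by norm_num⟩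
  have h1 : ((b + a : ℝ), d + c, (1:ℝ)) ∈ Lmap a' b' c' d' := by
    rw [← h]; exact ⟨1, by norm_num⟩
  obtain ⟨t, ht⟩ := h0
  obtain ⟨s, hs⟩ := h1
  simp only [Prod.mk.injEq] at ht hs
  obtain ⟨e1, e2, e3⟩ := ht
  obtain ⟨f1, f2, f3⟩ := hs
  subst e3; subst f3
  simp only [Prod.mk.injEq]
  refine ⟨by linarith, by linarith, by linarith, by linarith⟩

lemma lmap_inter {a b c d a' b' c' d' : ℝ} (h : (a, c) ≠ (a', c')) :
    (Lmap a b c d ∩ Lmap a' b' c' d').Nonempty ↔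
      (a - a') * (d - d') = (b - b') * (c - c') := by
  constructor
  · rintro ⟨x, ⟨t, rfl⟩, ⟨s, hx⟩⟩
    simp only [Prod.mk.injEq] at hx
    obtain ⟨e1, e2, e3⟩ := hx
    subst e3
    linear_combination (c' - c) * e1 + (a - a') * e2
  · intro hE
    by_cases ha : a = a'
    · have hc : c ≠ c' := by
        intro hcc; exact h (by rw [ha, hcc])
      subst ha
      have hb : b = b' := by
        have h0 : (b - b') * (c - c') = 0 := by linear_combination -hE
        rcases mul_eq_zero.1 h0 with h1 | h1
        · linarith [sub_eq_zero.1 h1]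
        · exact absurd (sub_eq_zero.1 h1) hc
      subst hb
      refine ⟨(b + ((d' - d)/(c - c')) * a, d + ((d' - d)/(c - c')) * c,
        (d' - d)/(c - c')), ⟨(d' - d)/(c - c'), rfl⟩, ⟨(d' - d)/(c - c'), ?_⟩⟩
      have hcc : c - c' ≠ 0 := sub_ne_zero.2 hc
      have : d + (d' - d) / (c - c') * c = d' + (d' - d) / (c - c') * c' := by
        field_simp
        ring
      rw [this]
    · have ha' : a - a' ≠ 0 := sub_ne_zero.2 ha
      refine ⟨(b + ((b' - b)/(a - a')) * a, d + ((b' - b)/(a - a')) * c,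
        (b' - b)/(a - a')), ⟨(b' - b)/(a - a'), rfl⟩, ⟨(b' - b)/(a - a'), ?_⟩⟩
      have e1 : b + (b' - b)/(a - a') * a = b' + (b' - b)/(a - a') * a' := by
        field_simp
        ring
      have e2 : d + (b' - b)/(a - a') * c = d' + (b' - b)/(a - a') * c' := by
        field_simp
        linear_combination hE
      rw [e1, e2]

/-- **Lemma (trapezoid count via line intersections).** Let `𝕀` be a set of `N` distinct
intervals, and `D` the doubled set of quadruples (intervals together with their reverses),
assumed pairwise distinct with pairwise distinct `(a, c)`-parts. Let `T` count unordered
pairs of distinct intervals with multiplicity given by the number of the two trapezoid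
equations satisfied (so the ordered count is `2T`), and let `P` count unordered pairs of
distinct intersecting lines among `{ℒ(q) : q ∈ D}` (so the ordered count is `2P`).
Then `P = 2T + N`. -/
theorem trapezoid_line_count (N T P : ℕ) (𝕀 : Finset (ℝ × ℝ × ℝ × ℝ))
    (hN : 𝕀.card = N)
    (hint : ∀ i ∈ 𝕀, (i.1, i.2.1) ≠ (i.2.2.1, i.2.2.2))
    (D : Finset (ℝ × ℝ × ℝ × ℝ))
    (hD : D = 𝕀 ∪ 𝕀.image reverseInterval)
    (hDcard : D.card = 2 * N)
    (hgen : ∀ q ∈ D, ∀ q' ∈ D, q ≠ q' → (q.1, q.2.2.1) ≠ (q'.1, q'.2.2.1))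
    (hT : 2 * T = ∑ p ∈ 𝕀.offDiag,
        ((if (p.1.1 - p.2.1) * (p.1.2.2.2 - p.2.2.2.2) =
              (p.1.2.1 - p.2.2.1) * (p.1.2.2.1 - p.2.2.2.1) then 1 else 0) +
         (if (p.1.1 - p.2.2.2.1) * (p.1.2.2.2 - p.2.2.1) =
              (p.1.2.2.1 - p.2.1) * (p.1.2.1 - p.2.2.2.2) then 1 else 0)))
    (hP : 2 * P = (((D.image fun q => Lmap q.1 q.2.1 q.2.2.1 q.2.2.2).offDiag.filter
        fun L => (L.1 ∩ L.2).Nonempty).card)) :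
    P = 2 * T + N := by
  set f : (ℝ × ℝ × ℝ × ℝ) → Set (ℝ × ℝ × ℝ) :=
    fun q => Lmap q.1 q.2.1 q.2.2.1 q.2.2.2 with hf
  -- line intersection criterion for pairs from D
  have hcrit : ∀ q ∈ D, ∀ q' ∈ D, q ≠ q' →
      ((f q ∩ f q').Nonempty ↔ Eline q q') := by
    intro q hq q' hq' hne
    exact lmap_inter (hgen q hq q' hq' hne)
  -- Step 1: express 2P as a sum over D.offDiag
  have hcard : ((D.offDiag.filter fun p => Eline p.1 p.2).card)
      = (((D.image f).offDiag.filter fun L => (L.1 ∩ L.2).Nonempty).card) := by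
    apply Finset.card_bij (fun p _ => (f p.1, f p.2))
    · intro p hp
      rw [Finset.mem_filter, Finset.mem_offDiag] at hp
      obtain ⟨⟨h1, h2, h3⟩, h4⟩ := hp
      rw [Finset.mem_filter, Finset.mem_offDiag]
      exact ⟨⟨Finset.mem_image_of_mem f h1, Finset.mem_image_of_mem f h2,
        fun hh => h3 (lmap_injective hh)⟩, (hcrit _ h1 _ h2 h3).2 h4⟩
    · intro p₁ h₁ p₂ h₂ he
      rw [Prod.mk.injEq] at he
      exact Prod.ext (lmap_injective he.1) (lmap_injective he.2)
    · intro L hL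
      rw [Finset.mem_filter, Finset.mem_offDiag] at hL
      obtain ⟨⟨h1, h2, h3⟩, h4⟩ := hL
      obtain ⟨q, hq, hq'⟩ := Finset.mem_image.1 h1
      obtain ⟨r, hr, hr'⟩ := Finset.mem_image.1 h2
      have hne : q ≠ r := by
        rintro rfl; exact h3 (hq'.symm.trans hr')
      refine ⟨(q, r), ?_, ?_⟩
      · rw [Finset.mem_filter, Finset.mem_offDiag]
        refine ⟨⟨hq, hr, hne⟩, (hcrit _ hq _ hr hne).1 ?_⟩
        rw [hq', hr']; exact h4
      · rw [Prod.mk.injEq]; exact ⟨hq', hr'⟩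
  have hP2 : 2 * P = ∑ p ∈ D.offDiag, (if Eline p.1 p.2 then 1 else 0 : ℕ) := by
    rw [hP, ← hcard, Finset.card_filter]
  -- basic facts about the doubling
  have hrevinj : Function.Injective reverseInterval := by
    intro x y h
    have := congrArg reverseInterval h
    simpa [reverseInterval] using this
  have hdisj : Disjoint 𝕀 (𝕀.image reverseInterval) := by
    apply Finset.card_union_eq_card_add_card.1
    rw [← hD, hDcard, hN, Finset.card_image_of_injective _ hrevinj, hN]
    ring
  have hsplit : ∀ g : (ℝ × ℝ × ℝ × ℝ) → ℕ,
      ∑ q ∈ D, g q = ∑ i ∈ 𝕀, g i + ∑ i ∈ 𝕀, g (reverseInterval i) := by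
    intro g
    rw [hD, Finset.sum_union hdisj,
      Finset.sum_image (fun x _ y _ h => hrevinj h)]
  -- diagonal sums
  have hdiagE : ∀ (s : Finset (ℝ × ℝ × ℝ × ℝ)) (Q : (ℝ × ℝ × ℝ × ℝ) → (ℝ × ℝ × ℝ × ℝ) → Prop),
      (∀ q, Q q q) →
      ∑ p ∈ s.diag, (if Q p.1 p.2 then 1 else 0 : ℕ) = s.card := by
    intro s Q hQ
    have h1 : ∀ p ∈ s.diag, (if Q p.1 p.2 then 1 else 0 : ℕ) = 1 := by
      intro p hp
      rw [Finset.mem_diag] at hp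
      rw [if_pos]
      rw [← hp.2]
      exact hQ p.1
    rw [Finset.sum_congr rfl h1, Finset.sum_const, smul_eq_mul, mul_one,
      Finset.diag_card]
  -- product sums vs offDiag sums
  have hprodsplit : ∀ (s : Finset (ℝ × ℝ × ℝ × ℝ))
      (Q : (ℝ × ℝ × ℝ × ℝ) → (ℝ × ℝ × ℝ × ℝ) → Prop), (∀ q, Q q q) →
      ∑ q ∈ s, ∑ q' ∈ s, (if Q q q' then 1 else 0 : ℕ)
        = s.card + ∑ p ∈ s.offDiag, (if Q p.1 p.2 then 1 else 0 : ℕ) := by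
    intro s Q hQ
    rw [← Finset.sum_product', ← Finset.diag_union_offDiag,
      Finset.sum_union (Finset.disjoint_diag_offDiag s), hdiagE s Q hQ]
  have hElrefl : ∀ q : ℝ × ℝ × ℝ × ℝ, Eline q q := by
    intro q; unfold Eline; ring
  have hEmrefl : ∀ q : ℝ × ℝ × ℝ × ℝ, Emix q q := by
    intro q; unfold Emix; ring
  -- pointwise identifications
  have hBB : ∀ i j : ℝ × ℝ × ℝ × ℝ,
      Eline (reverseInterval i) (reverseInterval j) ↔ Eline i j := by
    intro i j
    unfold Eline reverseInterval
    constructor <;> intro h <;> linear_combination -h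
  have hAB : ∀ i j : ℝ × ℝ × ℝ × ℝ,
      Eline i (reverseInterval j) ↔ Emix i j := by
    intro i j
    unfold Eline Emix reverseInterval
    constructor <;> intro h <;> linear_combination h
  have hBA : ∀ i j : ℝ × ℝ × ℝ × ℝ,
      Eline (reverseInterval i) j ↔ Emix i j := by
    intro i j
    unfold Eline Emix reverseInterval
    constructor <;> intro h <;> linear_combination -h
  -- assemble the big product sum over D
  have hDsum : ∑ q ∈ D, ∑ q' ∈ D, (if Eline q q' then 1 else 0 : ℕ)
      = 2 * N + ∑ p ∈ D.offDiag, (if Eline p.1 p.2 then 1 else 0 : ℕ) := by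
    rw [← hDcard, ← hprodsplit D Eline hElrefl]
  have hIsum : ∑ q ∈ 𝕀, ∑ q' ∈ 𝕀, (if Eline q q' then 1 else 0 : ℕ)
      = N + ∑ p ∈ 𝕀.offDiag, (if Eline p.1 p.2 then 1 else 0 : ℕ) := by
    rw [← hN, ← hprodsplit 𝕀 Eline hElrefl]
  have hIsum2 : ∑ q ∈ 𝕀, ∑ q' ∈ 𝕀, (if Emix q q' then 1 else 0 : ℕ)
      = N + ∑ p ∈ 𝕀.offDiag, (if Emix p.1 p.2 then 1 else 0 : ℕ) := by
    rw [← hN, ← hprodsplit 𝕀 Emix hEmrefl]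
  -- split the D-product sum into four quadrants
  have hquad : ∑ q ∈ D, ∑ q' ∈ D, (if Eline q q' then 1 else 0 : ℕ)
      = 2 * (∑ q ∈ 𝕀, ∑ q' ∈ 𝕀, (if Eline q q' then 1 else 0 : ℕ))
        + 2 * (∑ q ∈ 𝕀, ∑ q' ∈ 𝕀, (if Emix q q' then 1 else 0 : ℕ)) := by
    rw [hsplit (fun q => ∑ q' ∈ D, (if Eline q q' then 1 else 0 : ℕ))]
    have h1 : ∀ i : ℝ × ℝ × ℝ × ℝ,
        ∑ q' ∈ D, (if Eline i q' then 1 else 0 : ℕ)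
          = ∑ j ∈ 𝕀, (if Eline i j then 1 else 0 : ℕ)
            + ∑ j ∈ 𝕀, (if Emix i j then 1 else 0 : ℕ) := by
      intro i
      rw [hsplit (fun q' => (if Eline i q' then 1 else 0 : ℕ))]
      congr 1
      apply Finset.sum_congr rfl
      intro j _
      simp only [hAB i j]
    have h2 : ∀ i : ℝ × ℝ × ℝ × ℝ,
        ∑ q' ∈ D, (if Eline (reverseInterval i) q' then 1 else 0 : ℕ)
          = ∑ j ∈ 𝕀, (if Emix i j then 1 else 0 : ℕ)
            + ∑ j ∈ 𝕀, (if Eline i j then 1 else 0 : ℕ) := by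
      intro i
      rw [hsplit (fun q' => (if Eline (reverseInterval i) q' then 1 else 0 : ℕ))]
      congr 1
      · apply Finset.sum_congr rfl
        intro j _
        simp only [hBA i j]
      · apply Finset.sum_congr rfl
        intro j _
        simp only [hBB i j]
    rw [Finset.sum_congr rfl (fun i _ => h1 i),
      Finset.sum_congr rfl (fun i _ => h2 i),
      Finset.sum_add_distrib, Finset.sum_add_distrib]
    ring
  -- rewrite hT
  have hT' : 2 * T = ∑ p ∈ 𝕀.offDiag, (if Eline p.1 p.2 then 1 else 0 : ℕ)
      + ∑ p ∈ 𝕀.offDiag, (if Emix p.1 p.2 then 1 else 0 : ℕ) := by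
    rw [hT, Finset.sum_add_distrib]
    rfl
  -- final arithmetic
  omega
end

section
/- Let m₁, m₂, m₃, r₁, r₂, r₃ ∈ ℝ with m₃ = m₁m₂. Then for every a ∈ ℝ, the point (r₁, r₃ − m₁r₂, −m₁) ∈ ℝ³ lies on the line ℒ(a, m₁a + r₁, m₂a + r₂, m₃a + r₃). In particular, all lines of this one-parameter family are concurrent. -/
/-- **Lemma (concurrent family).** If `m₃ = m₁ m₂`, then for every `a ∈ ℝ` the point
`(r₁, r₃ − m₁ r₂, −m₁)` lies on the line `ℒ(a, m₁a + r₁, m₂a + r₂, m₃a + r₃)`; in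
particular all lines of this one-parameter family are concurrent. -/
theorem concurrent_family (m₁ m₂ m₃ r₁ r₂ r₃ : ℝ) (h : m₃ = m₁ * m₂) (a : ℝ) :
    ((r₁, r₃ - m₁ * r₂, -m₁) : ℝ × ℝ × ℝ) ∈
      Lmap a (m₁ * a + r₁) (m₂ * a + r₂) (m₃ * a + r₃) := by
  exact ⟨-m₁, by simp [h, Prod.ext_iff]; ring⟩
end

section
/- Let m₁, m₂, m₃, r₁, r₂, r₃ ∈ ℝ, let a₁, a₂, a₃ ∈ ℝ be pairwise distinct, and let (a,b,c,d) ∈ ℝ⁴ satisfy (a − aⱼ)(d − (m₃aⱼ + r₃)) = (b − (m₁aⱼ + r₁))(c − (m₂aⱼ + r₂)) for j = 1, 2, 3. Then m₃ = m₁m₂. -/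
/-- **Lemma (three collinear-parameterized equations force `m₃ = m₁m₂`).** If `(a,b,c,d)`
satisfies `(a − aⱼ)(d − (m₃aⱼ + r₃)) = (b − (m₁aⱼ + r₁))(c − (m₂aⱼ + r₂))` for three
pairwise distinct values `a₁, a₂, a₃`, then `m₃ = m₁ m₂`. -/
theorem leading_coefficient_vanishes (m₁ m₂ m₃ r₁ r₂ r₃ a₁ a₂ a₃ a b c d : ℝ)
    (h12 : a₁ ≠ a₂) (h13 : a₁ ≠ a₃) (h23 : a₂ ≠ a₃)
    (h1 : (a - a₁) * (d - (m₃ * a₁ + r₃)) = (b - (m₁ * a₁ + r₁)) * (c - (m₂ * a₁ + r₂)))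
    (h2 : (a - a₂) * (d - (m₃ * a₂ + r₃)) = (b - (m₁ * a₂ + r₁)) * (c - (m₂ * a₂ + r₂)))
    (h3 : (a - a₃) * (d - (m₃ * a₃ + r₃)) = (b - (m₁ * a₃ + r₁)) * (c - (m₂ * a₃ + r₂))) :
    m₃ = m₁ * m₂ := by
  have q12 : (m₃ - m₁*m₂)*(a₁+a₂) + (-(m₃*a) - d + r₃ + m₁*(c-r₂) + m₂*(b-r₁)) = 0 := by
    apply mul_left_cancel₀ (sub_ne_zero.mpr h12)
    linear_combination h1 - h2
  have q13 : (m₃ - m₁*m₂)*(a₁+a₃) + (-(m₃*a) - d + r₃ + m₁*(c-r₂) + m₂*(b-r₁)) = 0 := by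
    apply mul_left_cancel₀ (sub_ne_zero.mpr h13)
    linear_combination h1 - h3
  have q : (m₃ - m₁*m₂) = 0 := by
    apply mul_left_cancel₀ (sub_ne_zero.mpr h23)
    linear_combination q12 - q13
  linarith
end

section
/- Let A, B, C be nonzero reals. For all θ, φ ∈ ℝ, the intervals ((A/C) cos θ, A sin θ, (B/C) sin θ, −B cos θ) and ((A/C) cos φ, A sin φ, −(B/C) sin φ, B cos φ) satisfy (a − a')(d − d') = (b − b')(c − c'), where (a,b,c,d) and (a',b',c',d') denote the two quadruples. In particular, every pair of intervals, one from each of the two families parameterized by θ ∈ [0, 2π], forms a trapezoid. -/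
open Real

/-- Two intervals `(a,b,c,d)` and `(a',b',c',d')` form a trapezoid if
`(a−a')(d−d') = (b−b')(c−c')` or `(a−c')(d−b') = (c−a')(b−d')`. -/
def FormsTrapezoid (i j : ℝ × ℝ × ℝ × ℝ) : Prop :=
  (i.1 - j.1) * (i.2.2.2 - j.2.2.2) = (i.2.1 - j.2.1) * (i.2.2.1 - j.2.2.1) ∨
  (i.1 - j.2.2.1) * (i.2.2.2 - j.2.1) = (i.2.2.1 - j.1) * (i.2.1 - j.2.2.2)

/-- **Lemma (intervals from the two rulings of a hyperboloid form trapezoids).** For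
nonzero `A, B, C` and all `θ, φ ∈ ℝ`, the intervals
`((A/C)cos θ, A sin θ, (B/C)sin θ, −B cos θ)` and
`((A/C)cos φ, A sin φ, −(B/C)sin φ, B cos φ)` satisfy
`(a−a')(d−d') = (b−b')(c−c')`; in particular they form a trapezoid. -/
theorem hyperboloid_intervals_trapezoid (A B C : ℝ)
    (hA : A ≠ 0) (hB : B ≠ 0) (hC : C ≠ 0) (θ φ : ℝ) :
    ((A / C) * cos θ - (A / C) * cos φ) * (-B * cos θ - B * cos φ) =
      (A * sin θ - A * sin φ) * ((B / C) * sin θ - -((B / C) * sin φ)) ∧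
    FormsTrapezoid
      ((A / C) * cos θ, A * sin θ, (B / C) * sin θ, -B * cos θ)
      ((A / C) * cos φ, A * sin φ, -((B / C) * sin φ), B * cos φ) := by
  have key : ((A / C) * cos θ - (A / C) * cos φ) * (-B * cos θ - B * cos φ) =
      (A * sin θ - A * sin φ) * ((B / C) * sin θ - -((B / C) * sin φ)) := by
    have h1 := sin_sq_add_cos_sq θ
    have h2 := sin_sq_add_cos_sq φ
    field_simp
    linear_combination h2 - h1
  exact ⟨key, Or.inl key⟩
end

section
/- Let A, B be nonzero reals and λ, μ ∈ ℝ \ {0}. Then the intervals (Aλ/2, A/(2λ), Bλ/2, −B/(2λ)) and (Aμ/2, A/(2μ), −Bμ/2, B/(2μ)) satisfy (a − a')(d − d') = (b − b')(c − c'), where (a,b,c,d) and (a',b',c',d') denote the two quadruples. In particular, every pair of intervals, one from each of the two families parameterized by λ ∈ ℝ \ {0}, forms a trapezoid. -/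
/-- **Lemma (intervals from the two rulings of a hyperbolic paraboloid form trapezoids).**
For nonzero `A, B` and `λ, μ ≠ 0`, the intervals `(Aλ/2, A/(2λ), Bλ/2, −B/(2λ))` and
`(Aμ/2, A/(2μ), −Bμ/2, B/(2μ))` satisfy `(a−a')(d−d') = (b−b')(c−c')`; in particular
they form a trapezoid. -/
theorem hyperbolic_paraboloid_intervals_trapezoid (A B lam mu : ℝ)
    (hA : A ≠ 0) (hB : B ≠ 0) (hlam : lam ≠ 0) (hmu : mu ≠ 0) :
    (A * lam / 2 - A * mu / 2) * (-B / (2 * lam) - B / (2 * mu)) =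
      (A / (2 * lam) - A / (2 * mu)) * (B * lam / 2 - -(B * mu / 2)) ∧
    FormsTrapezoid
      (A * lam / 2, A / (2 * lam), B * lam / 2, -B / (2 * lam))
      (A * mu / 2, A / (2 * mu), -(B * mu / 2), B / (2 * mu)) := by
  have h : (A * lam / 2 - A * mu / 2) * (-B / (2 * lam) - B / (2 * mu)) =
      (A / (2 * lam) - A / (2 * mu)) * (B * lam / 2 - -(B * mu / 2)) := by
    field_simp
    ring
  exact ⟨h, Or.inl h⟩
end

section
/- Let α ∈ ℝ and let R_α : ℝ³ → ℝ³ be the rotation about the x-axis by angle α, given by R_α(x,y,z) = (x, y cos α − z sin α, y sin α + z cos α). Let (a,b,c,d) ∈ ℝ⁴ with c sin α + cos α ≠ 0. Then the image of the line ℒ(a,b,c,d) under R_α equals the line ℒ(a/(c sin α + cos α), ((bc − ad) sin α + b cos α)/(c sin α + cos α), (c cos α − sin α)/(c sin α + cos α), d/(c sin α + cos α)). -/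
open Real

/-- **Lemma (effect of rotation about the `x`-axis).** Let `R_α(x,y,z) =
(x, y cos α − z sin α, y sin α + z cos α)` and suppose `c sin α + cos α ≠ 0`. Then the
image of `ℒ(a,b,c,d)` under `R_α` equals
`ℒ(a/K, ((bc − ad) sin α + b cos α)/K, (c cos α − sin α)/K, d/K)` with
`K = c sin α + cos α`. -/
theorem Lmap_rotate_x (α a b c d : ℝ) (h : c * sin α + cos α ≠ 0) :
    (fun x : ℝ × ℝ × ℝ =>
        ((x.1, x.2.1 * cos α - x.2.2 * sin α,
          x.2.1 * sin α + x.2.2 * cos α) : ℝ × ℝ × ℝ)) '' Lmap a b c d =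
      Lmap (a / (c * sin α + cos α))
        (((b * c - a * d) * sin α + b * cos α) / (c * sin α + cos α))
        ((c * cos α - sin α) / (c * sin α + cos α))
        (d / (c * sin α + cos α)) := by
  have hpy := sin_sq_add_cos_sq α
  ext p
  simp only [Set.mem_image, Lmap, Set.mem_setOf_eq]
  constructor
  · rintro ⟨q, ⟨t, rfl⟩, rfl⟩
    refine ⟨d * sin α + t * (c * sin α + cos α), ?_⟩
    simp only [Prod.mk.injEq]
    refine ⟨?_, ?_, by ring⟩
    · field_simp; ring
    · field_simp; linear_combination d * hpy
  · rintro ⟨s, rfl⟩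
    refine ⟨(b + (s - d * sin α) / (c * sin α + cos α) * a,
      d + (s - d * sin α) / (c * sin α + cos α) * c,
      (s - d * sin α) / (c * sin α + cos α)), ⟨_, rfl⟩, ?_⟩
    simp only [Prod.mk.injEq]
    have h' : sin α * c + cos α ≠ 0 := by rwa [mul_comm] at h
    have h'' : cos α + sin α * c ≠ 0 := by rwa [add_comm] at h'
    refine ⟨by field_simp; ring, ?_, ?_⟩
    · field_simp
      ring_nf
      linear_combination d * hpy
    · field_simp
      ring_nf
end

section
/- Let (a,b,c,d) and (a',b',c',d') be distinct quadruples in ℝ⁴. Then the lines ℒ⊥(a,b,c,d) and ℒ⊥(a',b',c',d') in ℝ³ have nonempty intersection if and only if (b−b')(d−d') = −(a−a')(c−c') and (c,d) ≠ (c',d'). -/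
/-- The line in `ℝ³` associated with the quadruple `(a, b, c, d) ∈ ℝ⁴` for the
orthodiagonal problem: `ℒ⊥(a,b,c,d) = {(b + tc, −a + td, t) : t ∈ ℝ}`. -/
def Lperp (a b c d : ℝ) : Set (ℝ × ℝ × ℝ) :=
  {q | ∃ t : ℝ, q = (b + t * c, -a + t * d, t)}

/-- **Lemma (intersection criterion for `ℒ⊥`).** For distinct quadruples
`(a,b,c,d) ≠ (a',b',c',d')` in `ℝ⁴`, the lines `ℒ⊥(a,b,c,d)` and `ℒ⊥(a',b',c',d')` meet
if and only if `(b−b')(d−d') = −(a−a')(c−c')` and `(c,d) ≠ (c',d')`. -/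
theorem Lperp_intersect_iff (a b c d a' b' c' d' : ℝ)
    (h : (a, b, c, d) ≠ (a', b', c', d')) :
    (Lperp a b c d ∩ Lperp a' b' c' d').Nonempty ↔
      ((b - b') * (d - d') = -((a - a') * (c - c')) ∧ (c, d) ≠ (c', d')) := by
  constructor
  · rintro ⟨q, ⟨t, rfl⟩, ⟨s, hq⟩⟩
    have h3 : t = s := congrArg (fun p => p.2.2) hq
    subst h3
    have h1 : b + t * c = b' + t * c' := congrArg (fun p => p.1) hq
    have h2 : -a + t * d = -a' + t * d' := congrArg (fun p => p.2.1) hq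
    refine ⟨by linear_combination (d - d') * h1 - (c - c') * h2, ?_⟩
    rintro hcd
    rw [Prod.mk.injEq] at hcd
    obtain ⟨hc, hd⟩ := hcd
    subst hc; subst hd
    apply h
    have hb : b = b' := by linarith
    have ha : a = a' := by linarith
    simp [ha, hb]
  · rintro ⟨heq, hcd⟩
    by_cases hc : c = c'
    · have hd : d ≠ d' := by
        intro hd; exact hcd (by rw [hc, hd])
      have hb : b = b' := by
        have : (b - b') * (d - d') = 0 := by rw [heq, hc]; ring
        rcases mul_eq_zero.1 this with h1 | h1
        · linarith
        · exact absurd (by linarith) hd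
      refine ⟨(b + ((a - a') / (d - d')) * c, -a + ((a - a') / (d - d')) * d,
        (a - a') / (d - d')), ⟨_, rfl⟩, ⟨(a - a') / (d - d'), ?_⟩⟩
      have hdd : d - d' ≠ 0 := sub_ne_zero.2 hd
      rw [Prod.mk.injEq, Prod.mk.injEq]
      refine ⟨by rw [hb, hc], ?_, rfl⟩
      field_simp
      ring
    · have hcc : c - c' ≠ 0 := sub_ne_zero.2 hc
      refine ⟨(b + ((b' - b) / (c - c')) * c, -a + ((b' - b) / (c - c')) * d,
        (b' - b) / (c - c')), ⟨_, rfl⟩, ⟨(b' - b) / (c - c'), ?_⟩⟩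
      rw [Prod.mk.injEq, Prod.mk.injEq]
      refine ⟨by field_simp; ring, ?_, rfl⟩
      field_simp
      nlinarith [heq]
end

section
/- Let ρ ∈ ℝ with ρ ≠ 0, and let (a,b,c,d) and (a',b',c',d') be distinct quadruples in ℝ⁴. Then the lines ℒ^ρ(a,b,c,d) and ℒ^ρ(a',b',c',d') in ℝ³ have nonempty intersection if and only if (a−a')(d−d') = ρ(b−b')(c−c') and (a,c) ≠ (a',c'). -/
/-- The line in `ℝ³` associated with the quadruple `(a, b, c, d) ∈ ℝ⁴` for the fixed
slope-ratio `ρ` problem: `ℒ^ρ(a,b,c,d) = {(b + ta, d + tρc, t) : t ∈ ℝ}`. -/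
def Lrho (ρ a b c d : ℝ) : Set (ℝ × ℝ × ℝ) :=
  {q | ∃ t : ℝ, q = (b + t * a, d + t * (ρ * c), t)}

/-- **Lemma (intersection criterion for `ℒ^ρ`).** Let `ρ ≠ 0`. For distinct quadruples
`(a,b,c,d) ≠ (a',b',c',d')` in `ℝ⁴`, the lines `ℒ^ρ(a,b,c,d)` and `ℒ^ρ(a',b',c',d')`
meet if and only if `(a−a')(d−d') = ρ(b−b')(c−c')` and `(a,c) ≠ (a',c')`. -/
theorem Lrho_intersect_iff (ρ a b c d a' b' c' d' : ℝ) (hρ : ρ ≠ 0)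
    (h : (a, b, c, d) ≠ (a', b', c', d')) :
    (Lrho ρ a b c d ∩ Lrho ρ a' b' c' d').Nonempty ↔
      ((a - a') * (d - d') = ρ * ((b - b') * (c - c')) ∧ (a, c) ≠ (a', c')) := by
  have key : (Lrho ρ a b c d ∩ Lrho ρ a' b' c' d').Nonempty ↔
      ∃ t : ℝ, t * (a - a') = b' - b ∧ t * (ρ * (c - c')) = d' - d := by
    constructor
    · rintro ⟨q, ⟨t, rfl⟩, ⟨s, hs⟩⟩
      simp only [Prod.ext_iff] at hs
      obtain ⟨h1, h2, h3⟩ := hs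
      subst h3
      exact ⟨t, by linarith [h1], by nlinarith [h2]⟩
    · rintro ⟨t, h1, h2⟩
      refine ⟨(b + t * a, d + t * (ρ * c), t), ⟨t, rfl⟩, t, ?_⟩
      have e1 : b + t * a = b' + t * a' := by linear_combination h1
      have e2 : d + t * (ρ * c) = d' + t * (ρ * c') := by linear_combination h2
      rw [e1, e2]
  rw [key]
  constructor
  · rintro ⟨t, h1, h2⟩
    constructor
    · linear_combination (-(ρ * (c - c'))) * h1 + (a - a') * h2
    · intro hac
      simp only [Prod.ext_iff] at hac
      obtain ⟨ha, hc⟩ := hac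
      apply h
      have hb : b = b' := by rw [ha] at h1; simp at h1; linarith
      have hd : d = d' := by rw [hc] at h2; simp at h2; linarith
      simp [ha, hb, hc, hd]
  · rintro ⟨heq, hac⟩
    by_cases ha : a = a'
    · have hc : c ≠ c' := by
        intro hc; exact hac (by simp [ha, hc])
      have hb : b = b' := by
        have : ρ * ((b - b') * (c - c')) = 0 := by rw [← heq, ha]; ring
        rcases mul_eq_zero.1 this with h' | h'
        · exact absurd h' hρ
        · rcases mul_eq_zero.1 h' with h'' | h''
          · linarith
          · exact absurd (by linarith) hc
      have hcc : ρ * (c - c') ≠ 0 := mul_ne_zero hρ (sub_ne_zero.2 hc)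
      refine ⟨(d' - d) / (ρ * (c - c')), by rw [ha, hb]; ring, ?_⟩
      field_simp
    · have ha' : a - a' ≠ 0 := sub_ne_zero.2 ha
      refine ⟨(b' - b) / (a - a'), ?_, ?_⟩
      · field_simp
      · field_simp
        linear_combination heq
end
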